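/- Let G be a stratified ground program with an EDB/IDB partition, let Q be an IDB query atom that is finitely recursive on G, let M be a stable model of G, and let M' = variant(Q,G,M). If N' ⊆ M' is a model of the reduct Magic(Q,G)^{M'}, then the interpretation M \ {a ∈ A : (left copy of) a ∈ M' and (left copy of) a ∉ N'} is a model of the reduct G^M. -/

import Mathlib

/-- A ground ASP rule over a type `A` of ground atoms: a finite nonempty head,
a finite positive body and a finite negative body. -/
structure GroundRule (A : Type) : Type where
  head : Set A
  pos : Set A
  neg : Set A
  head_fin : head.Finite
  pos_fin : pos.Finite
  neg_fin : neg.Finite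
  head_ne : head.Nonempty

/-- An interpretation `I` satisfies a ground rule. -/
def GroundRule.satisfiedBy {A : Type} (I : Set A) (r : GroundRule A) : Prop :=
  r.pos ⊆ I ∧ r.neg ∩ I = ∅ → (r.head ∩ I).Nonempty

/-- `I` is a model of the ground program `G`. -/
def isModel {A : Type} (I : Set A) (G : Set (GroundRule A)) : Prop :=
  ∀ r ∈ G, r.satisfiedBy I

/-- The rule obtained by deleting the negative body. -/
def GroundRule.reduce {A : Type} (r : GroundRule A) : GroundRule A :=
  ⟨r.head, r.pos, ∅, r.head_fin, r.pos_fin, Set.finite_empty, r.head_ne⟩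

/-- The reduct `G^I`. -/
def reduct {A : Type} (G : Set (GroundRule A)) (I : Set A) : Set (GroundRule A) :=
  {g | ∃ r ∈ G, r.neg ∩ I = ∅ ∧ g = r.reduce}

/-- `M` is a stable model of `G`: a ⊆-minimal model of the reduct `G^M`. -/
def isStableModel {A : Type} (G : Set (GroundRule A)) (M : Set A) : Prop :=
  isModel M (reduct G M) ∧ ∀ N ⊆ M, isModel N (reduct G M) → N = M

/-- Brave entailment: `Q` is in some stable model. -/
def braveEnt {A : Type} (G : Set (GroundRule A)) (Q : A) : Prop :=
  ∃ M, isStableModel G M ∧ Q ∈ M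

/-- Cautious entailment: `Q` is in every stable model. -/
def cautiousEnt {A : Type} (G : Set (GroundRule A)) (Q : A) : Prop :=
  ∀ M, isStableModel G M → Q ∈ M

/-- `X` is an unfounded set for `G` w.r.t. `I`. -/
def isUnfounded {A : Type} (G : Set (GroundRule A)) (I X : Set A) : Prop :=
  ∀ r ∈ G, (r.head ∩ X).Nonempty →
    ¬ r.pos ⊆ I ∨ (r.neg ∩ I).Nonempty ∨ (r.pos ∩ X).Nonempty ∨
      (r.head ∩ (I \ X)).Nonempty

/-- `G` is stratified: it admits a level mapping. -/
def isStratified {A : Type} (G : Set (GroundRule A)) : Prop :=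
  ∃ lv : A → ℕ, ∀ r ∈ G, ∀ h ∈ r.head,
    (∀ b ∈ r.pos, lv b ≤ lv h) ∧ (∀ b ∈ r.neg, lv b < lv h)

/-- The set `R(Q,G)` of atoms relevant for `Q` in `G` (the least set containing `Q`
and closed under rules whose head intersects it). -/
def relevantFor {A : Type} (G : Set (GroundRule A)) (Q : A) : Set A :=
  ⋂₀ {R : Set A | Q ∈ R ∧ ∀ r ∈ G, (r.head ∩ R).Nonempty → r.head ∪ r.pos ∪ r.neg ⊆ R}

/-- `Q` is finitely recursive on `G`. -/
def finitelyRecursive {A : Type} (G : Set (GroundRule A)) (Q : A) : Prop :=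
  (relevantFor G Q).Finite

/-- A fact: a singleton head and empty bodies. -/
def GroundRule.isFact {A : Type} (r : GroundRule A) : Prop :=
  (∃ a, r.head = {a}) ∧ r.pos = ∅ ∧ r.neg = ∅

/-- The fact with head `{a}`. -/
def factRule {A : Type} (a : A) : GroundRule A :=
  ⟨{a}, ∅, ∅, Set.finite_singleton a, Set.finite_empty, Set.finite_empty,
    Set.singleton_nonempty a⟩

/-- An EDB/IDB partition of a ground program: `idb` and `edb` are disjoint and
every rule of `edb` is a fact. -/
def isPartition {A : Type} (idb edb : Set (GroundRule A)) : Prop :=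
  Disjoint idb edb ∧ ∀ r ∈ edb, r.isFact

/-- `a` is an IDB atom: it occurs in the head of some IDB rule. -/
def isIDBAtom {A : Type} (idb : Set (GroundRule A)) (a : A) : Prop :=
  ∃ r ∈ idb, a ∈ r.head
/-- The magic rule `m(q) :- m(p)` (magic atoms live in the right copy of `A ⊕ A`). -/
def magicRule {A : Type} (q p : A) : GroundRule (A ⊕ A) :=
  ⟨{Sum.inr q}, {Sum.inr p}, ∅, Set.finite_singleton _, Set.finite_singleton _,
    Set.finite_empty, Set.singleton_nonempty _⟩

/-- The modified rule obtained from `r`: the head (left copies), the positive body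
augmented with the magic atoms of all head atoms, and the negative body. -/
def modifiedRule {A : Type} (r : GroundRule A) : GroundRule (A ⊕ A) :=
  ⟨Sum.inl '' r.head, Sum.inl '' r.pos ∪ Sum.inr '' r.head, Sum.inl '' r.neg,
    r.head_fin.image _, (r.pos_fin.image _).union (r.head_fin.image _),
    r.neg_fin.image _, r.head_ne.image _⟩

/-- Renaming the atoms of a rule along a function. -/
def GroundRule.map {A B : Type} (f : A → B) (r : GroundRule A) : GroundRule B :=
  ⟨f '' r.head, f '' r.pos, f '' r.neg, r.head_fin.image _, r.pos_fin.image _,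
    r.neg_fin.image _, r.head_ne.image _⟩

/-- The magic subprogram: the seed fact `m(Q).` together with all magic rules. -/
def magicSub {A : Type} (idb : Set (GroundRule A)) (Q : A) : Set (GroundRule (A ⊕ A)) :=
  {factRule (Sum.inr Q)} ∪
    {g | ∃ r ∈ idb, ∃ p ∈ r.head, ∃ q ∈ (r.head ∪ r.pos ∪ r.neg) \ {p},
      isIDBAtom idb q ∧ g = magicRule q p}

/-- The magic transform `Magic(Q,G)` of the program `G = idb ∪ edb`:
the seed fact, the magic rules, the modified rules and the EDB facts. -/
def magicProg {A : Type} (idb edb : Set (GroundRule A)) (Q : A) :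
    Set (GroundRule (A ⊕ A)) :=
  magicSub idb Q ∪ {g | ∃ r ∈ idb, g = modifiedRule r} ∪ GroundRule.map Sum.inl '' edb

/-- The least model of a program (the intersection of all its models);
for a definite program this is its least model. -/
def leastModel {A : Type} (G : Set (GroundRule A)) : Set A :=
  ⋂₀ {I | isModel I G}

/-- `M*`: the least model of the magic subprogram. -/
def Mstar {A : Type} (idb : Set (GroundRule A)) (Q : A) : Set (A ⊕ A) :=
  leastModel (magicSub idb Q)

/-- The killed atoms w.r.t. `N`: atoms (of the left copy) that are false in `N` and
are EDB atoms or whose magic atom is true in `N`. -/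
def killed {A : Type} (idb : Set (GroundRule A)) (N : Set (A ⊕ A)) : Set A :=
  {a | Sum.inl a ∉ N ∧ (¬ isIDBAtom idb a ∨ Sum.inr a ∈ N)}

/-- The magic variant of an interpretation `I`: the heads of the EDB facts,
`M*`, and the left copies of the atoms of `I` whose magic atom is in `M*`. -/

lemma GroundRule.reduce_eq_self {A : Type} {r : GroundRule A} (h : r.neg = ∅) :
    r.reduce = r := by
  cases r with
  | mk H P Ng hf pf nf hn =>
    simp only [GroundRule.reduce]
    simp only at h
    subst h
    rfl

lemma magicSub_neg_empty {A : Type} {idb : Set (GroundRule A)} {Q : A}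
    {g : GroundRule (A ⊕ A)} (hg : g ∈ magicSub idb Q) : g.neg = ∅ := by
  rcases hg with hg | ⟨r, _, p, _, q, _, _, rfl⟩
  · rw [Set.mem_singleton_iff] at hg; subst hg; rfl
  · rfl

lemma magicSub_subset_magicProg {A : Type} (idb edb : Set (GroundRule A)) (Q : A) :
    magicSub idb Q ⊆ magicProg idb edb Q :=
  fun g hg => Or.inl (Or.inl hg)

lemma noinl_Mstar {A : Type} (idb : Set (GroundRule A)) (Q : A) (a : A) :
    Sum.inl a ∉ Mstar idb Q := by
  intro h
  have hmod : isModel (Set.range (Sum.inr : A → A ⊕ A)) (magicSub idb Q) := by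
    intro g hg _
    rcases hg with hg | ⟨r, _, p, _, q, _, _, rfl⟩
    · rw [Set.mem_singleton_iff] at hg; subst hg
      exact ⟨Sum.inr Q, rfl, ⟨Q, rfl⟩⟩
    · exact ⟨Sum.inr q, rfl, ⟨q, rfl⟩⟩
  have := h _ hmod
  simp at this

lemma Mstar_isModel {A : Type} (idb : Set (GroundRule A)) (Q : A) :
    isModel (Mstar idb Q) (magicSub idb Q) := by
  intro g hg hbody
  have hsing : ∃ x, g.head = {x} := by
    rcases hg with hg' | ⟨r, _, p, _, q, _, _, rfl⟩
    · rw [Set.mem_singleton_iff] at hg'; subst hg'; exact ⟨_, rfl⟩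
    · exact ⟨_, rfl⟩
  obtain ⟨x, hx⟩ := hsing
  refine ⟨x, hx ▸ rfl, ?_⟩
  intro I hI
  have hsat := hI g hg
  have : (g.head ∩ I).Nonempty := by
    apply hsat
    constructor
    · exact fun b hb => hbody.1 hb I hI
    · rw [magicSub_neg_empty hg]; simp
  rw [hx] at this
  obtain ⟨y, hy, hyI⟩ := this
  rw [Set.mem_singleton_iff] at hy
  exact hy ▸ hyI

def magicVariant {A : Type} (idb edb : Set (GroundRule A)) (Q : A) (I : Set A) :
    Set (A ⊕ A) :=
  (⋃ r ∈ edb, Sum.inl '' r.head) ∪ Mstar idb Q ∪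
    {x | ∃ a ∈ I, Sum.inr a ∈ Mstar idb Q ∧ x = Sum.inl a}

/-- If `M` is a stable model of `G = idb ∪ edb`, `M' = variant(Q,G,M)`, and
`N' ⊆ M'` is a model of the reduct `Magic(Q,G)^{M'}`, then removing from `M` the
(left-copy) atoms in `M' \ N'` yields a model of the reduct `G^M`. -/
theorem magicVariant_submodel {A : Type} (idb edb : Set (GroundRule A)) (Q : A)
    (hpart : isPartition idb edb) (hstrat : isStratified (idb ∪ edb))
    (hQ : isIDBAtom idb Q) (hfr : finitelyRecursive (idb ∪ edb) Q)
    (M : Set A) (hM : isStableModel (idb ∪ edb) M)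
    (N' : Set (A ⊕ A)) (hsub : N' ⊆ magicVariant idb edb Q M)
    (hN' : isModel N' (reduct (magicProg idb edb Q) (magicVariant idb edb Q M))) :
    isModel (M \ {a | Sum.inl a ∈ magicVariant idb edb Q M ∧ Sum.inl a ∉ N'})
      (reduct (idb ∪ edb) M) := by
  obtain ⟨hMmod, hMmin⟩ := hM
  -- EDB heads are in M
  have hedbM : ∀ r ∈ edb, ∀ a ∈ r.head, a ∈ M := by
    intro r hr a ha
    obtain ⟨⟨b, hb⟩, hp, hn⟩ := hpart.2 r hr
    have hred : r.reduce ∈ reduct (idb ∪ edb) M :=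
      ⟨r, Or.inr hr, by rw [hn]; simp, rfl⟩
    have := hMmod _ hred ⟨by rw [show r.reduce.pos = r.pos from rfl, hp]; simp,
      by simp [GroundRule.reduce]⟩
    obtain ⟨c, hc, hcM⟩ := this
    rw [show r.reduce.head = r.head from rfl, hb, Set.mem_singleton_iff] at hc
    rw [hb, Set.mem_singleton_iff] at ha
    exact ha ▸ hc ▸ hcM
  -- left copies in M' are in M
  have hleft : ∀ a : A, Sum.inl a ∈ magicVariant idb edb Q M → a ∈ M := by
    intro a ha
    simp only [magicVariant, Set.mem_union, Set.mem_setOf_eq] at ha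
    rcases ha with (ha | ha) | ⟨b, hbM, _, hab⟩
    · rw [Set.mem_iUnion₂] at ha
      obtain ⟨r, hr, hba⟩ := ha
      obtain ⟨b, hb, hba⟩ := hba
      exact (Sum.inl.inj hba) ▸ hedbM r hr b hb
    · exact absurd ha (noinl_Mstar idb Q a)
    · exact (Sum.inl.inj hab) ▸ hbM
  -- magicSub rules lie in the reduct of the magic program
  have hsubred : ∀ g ∈ magicSub idb Q,
      g ∈ reduct (magicProg idb edb Q) (magicVariant idb edb Q M) := by
    intro g hg
    exact ⟨g, magicSub_subset_magicProg idb edb Q hg,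
      by rw [magicSub_neg_empty hg]; simp,
      (GroundRule.reduce_eq_self (magicSub_neg_empty hg)).symm⟩
  -- N' is a model of magicSub
  have hN'sub : isModel N' (magicSub idb Q) := by
    intro g hg
    have := hN' g (hsubred g hg)
    exact this
  -- Mstar ⊆ N'
  have hMstarN' : Mstar idb Q ⊆ N' := fun x hx => hx N' hN'sub
  -- every atom of M is an IDB atom or an EDB head
  have hatomM : ∀ a ∈ M, isIDBAtom idb a ∨ ∃ r ∈ edb, a ∈ r.head := by
    intro a haM
    by_contra hcon
    push_neg at hcon
    set S : Set A := {a ∈ M | isIDBAtom idb a ∨ ∃ r ∈ edb, a ∈ r.head} with hS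
    have hSsub : S ⊆ M := fun x hx => hx.1
    have hSmod : isModel S (reduct (idb ∪ edb) M) := by
      intro g hg ⟨hp, hn⟩
      obtain ⟨r, hr, hrn, rfl⟩ := hg
      have hpM : r.reduce.pos ⊆ M := fun x hx => (hp hx).1
      obtain ⟨h, hh, hhM⟩ := hMmod _ ⟨r, hr, hrn, rfl⟩
        ⟨hpM, by simp [GroundRule.reduce]⟩
      refine ⟨h, hh, hhM, ?_⟩
      rcases hr with hr | hr
      · exact Or.inl ⟨r, hr, hh⟩
      · exact Or.inr ⟨r, hr, hh⟩
    have := hMmin S hSsub hSmod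
    rw [← this] at haM
    rcases haM.2 with h1 | ⟨s, hs1, hs2⟩
    · exact hcon.1 h1
    · exact hcon.2 s hs1 hs2
  -- EDB heads are in N'
  have hedbN' : ∀ r ∈ edb, ∀ a ∈ r.head, Sum.inl a ∈ N' := by
    intro r hr a ha
    obtain ⟨⟨b, hb⟩, hp, hn⟩ := hpart.2 r hr
    have hmem : r.map Sum.inl ∈ magicProg idb edb Q := Or.inr ⟨r, hr, rfl⟩
    have hnegeq : (GroundRule.map (Sum.inl : A → A ⊕ A) r).neg = ∅ := by
      show Sum.inl '' r.neg = ∅; rw [hn]; simp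
    have hred : (GroundRule.map (Sum.inl : A → A ⊕ A) r).reduce ∈
        reduct (magicProg idb edb Q) (magicVariant idb edb Q M) :=
      ⟨_, hmem, by rw [hnegeq]; simp, rfl⟩
    have := hN' _ hred ⟨by show Sum.inl '' r.pos ⊆ N'; rw [hp]; simp,
      by simp [GroundRule.reduce]⟩
    obtain ⟨x, hx, hxN⟩ := this
    have hx' : x ∈ Sum.inl '' r.head := hx
    rw [hb] at hx'
    obtain ⟨c, hc, rfl⟩ := hx'
    rw [Set.mem_singleton_iff] at hc
    rw [hb, Set.mem_singleton_iff] at ha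
    exact ha ▸ hc ▸ hxN
  -- magic closure
  have hmagic : ∀ r ∈ idb, ∀ p ∈ r.head, Sum.inr p ∈ Mstar idb Q →
      ∀ q ∈ r.head ∪ r.pos ∪ r.neg, isIDBAtom idb q → Sum.inr q ∈ Mstar idb Q := by
    intro r hr p hp hpM q hq hqidb
    by_cases hqp : q = p
    · exact hqp ▸ hpM
    · have hrule : magicRule q p ∈ magicSub idb Q :=
        Or.inr ⟨r, hr, p, hp, q, ⟨hq, hqp⟩, hqidb, rfl⟩
      have := Mstar_isModel idb Q _ hrule
        ⟨show ({Sum.inr p} : Set (A ⊕ A)) ⊆ Mstar idb Q from Set.singleton_subset_iff.mpr hpM,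
          by simp [magicRule]⟩
      obtain ⟨x, hx, hxM⟩ := this
      have hx' : x ∈ ({Sum.inr q} : Set (A ⊕ A)) := hx
      rw [Set.mem_singleton_iff] at hx'
      exact hx' ▸ hxM
  -- main argument
  intro g hg
  obtain ⟨r, hr, hneg, rfl⟩ := hg
  rintro ⟨hpos, -⟩
  have hposM : r.reduce.pos ⊆ M := fun a ha => (hpos ha).1
  obtain ⟨h, hh, hhM⟩ := hMmod _ ⟨r, hr, hneg, rfl⟩ ⟨hposM, by simp [GroundRule.reduce]⟩
  have hh' : h ∈ r.head := hh
  rcases hr with hridb | hredb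
  · -- r is an IDB rule
    by_cases hinl : Sum.inl h ∈ magicVariant idb edb Q M
    · have hinl' := hinl
      simp only [magicVariant, Set.mem_union, Set.mem_setOf_eq] at hinl'
      rcases hinl' with (hc | hc) | ⟨b, hbM, hbstar, hab⟩
      · -- h is an EDB head
        rw [Set.mem_iUnion₂] at hc
        obtain ⟨s, hs, hch⟩ := hc
        obtain ⟨c, hcs, hch⟩ := hch
        have : Sum.inl h ∈ N' := (Sum.inl.inj hch) ▸ hedbN' s hs c hcs
        exact ⟨h, hh, hhM, fun hK => hK.2 this⟩
      · exact absurd hc (noinl_Mstar idb Q h)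
      · -- m(h) ∈ M*: use the modified rule
        have hhstar : Sum.inr h ∈ Mstar idb Q := (Sum.inl.inj hab) ▸ hbstar
        have hmem : modifiedRule r ∈ magicProg idb edb Q :=
          Or.inl (Or.inr ⟨r, hridb, rfl⟩)
        have hnegM' : (modifiedRule r).neg ∩ magicVariant idb edb Q M = ∅ := by
          show Sum.inl '' r.neg ∩ _ = ∅
          ext x
          simp only [Set.mem_inter_iff, Set.mem_image, Set.mem_empty_iff_false,
            iff_false, not_and]
          rintro ⟨a, haneg, rfl⟩ haM'
          have : a ∈ M := hleft a haM'
          have : a ∈ r.neg ∩ M := ⟨haneg, this⟩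
          rw [hneg] at this
          exact this
        have hred : (modifiedRule r).reduce ∈
            reduct (magicProg idb edb Q) (magicVariant idb edb Q M) :=
          ⟨_, hmem, hnegM', rfl⟩
        have hbody : (modifiedRule r).reduce.pos ⊆ N' := by
          show Sum.inl '' r.pos ∪ Sum.inr '' r.head ⊆ N'
          rintro x (⟨a, ha, rfl⟩ | ⟨p, hp, rfl⟩)
          · -- inl a for a ∈ r.pos
            have haM : a ∈ M := (hpos (show a ∈ r.reduce.pos from ha)).1
            have hanK := (hpos (show a ∈ r.reduce.pos from ha)).2
            have haM' : Sum.inl a ∈ magicVariant idb edb Q M := by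
              rcases hatomM a haM with haidb | ⟨s, hs, has⟩
              · have : Sum.inr a ∈ Mstar idb Q :=
                  hmagic r hridb h hh' hhstar a (Or.inl (Or.inr ha)) haidb
                exact Or.inr ⟨a, haM, this, rfl⟩
              · exact Or.inl (Or.inl (Set.mem_biUnion hs ⟨a, has, rfl⟩))
            by_contra haN
            exact hanK ⟨haM', haN⟩
          · -- inr p for p ∈ r.head
            have hpidb : isIDBAtom idb p := ⟨r, hridb, hp⟩
            exact hMstarN' (hmagic r hridb h hh' hhstar p (Or.inl (Or.inl hp)) hpidb)
        have := hN' _ hred ⟨hbody, by simp [GroundRule.reduce]⟩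
        obtain ⟨x, hx, hxN⟩ := this
        have hx' : x ∈ Sum.inl '' r.head := hx
        obtain ⟨p, hphead, rfl⟩ := hx'
        have hpM : p ∈ M := hleft p (hsub hxN)
        exact ⟨p, hphead, hpM, fun hK => hK.2 hxN⟩
    · exact ⟨h, hh, hhM, fun hK => hinl hK.1⟩
  · -- r is an EDB fact
    have : Sum.inl h ∈ N' := hedbN' r hredb h hh'
    exact ⟨h, hh, hhM, fun hK => hK.2 this⟩
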